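/- Let a > 1. For every integer m ≥ 1 and all reals 0 ≤ x < z, the kernel mass of the modified Szász–Mirakjan–Kantorovich operator on [z,∞) satisfies R̂_{m,a}(1_{[z,∞)}; x) ≤ Λ²_m(x)/(z − x)², and consequently R̂_{m,a}(1_{[z,∞)}; x) ≤ (1 + x)²/(m·(z − x)²). Here 1_{[z,∞)} denotes the indicator function of [z,∞). -/

import Mathlib

open Real MeasureTheory Filter

/-- The modified Szász–Mirakjan–Kantorovich operator of Mishra and Yadav. -/
noncomputable def szaszKant (a : ℝ) (m : ℕ) (f : ℝ → ℝ) (x : ℝ) : ℝ :=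
  (m : ℝ) * ∑' k : ℕ,
    Real.exp (-(x * Real.log a / (a ^ ((1 : ℝ) / (m : ℝ)) - 1))) *
      (x * Real.log a / (a ^ ((1 : ℝ) / (m : ℝ)) - 1)) ^ k / (Nat.factorial k : ℝ) *
      ∫ t in ((k : ℝ) / (m : ℝ))..(((k : ℝ) + 1) / (m : ℝ)), f t

/-- The `n`-th central moment of the operator. -/
noncomputable def szaszKantCM (a : ℝ) (m : ℕ) (n : ℕ) (x : ℝ) : ℝ :=
  szaszKant a m (fun t => (t - x) ^ n) x

lemma expSum0 (l : ℝ) : ∑' k : ℕ, l ^ k / (Nat.factorial k : ℝ) = Real.exp l := by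
  rw [Real.exp_eq_exp_ℝ, NormedSpace.exp_eq_tsum_div]

lemma sum0 (l : ℝ) : Summable (fun k : ℕ => l ^ k / (Nat.factorial k : ℝ)) :=
  Real.summable_pow_div_factorial l

lemma sum1 (l : ℝ) : Summable (fun k : ℕ => (k : ℝ) * l ^ k / (Nat.factorial k : ℝ)) := by
  rw [← summable_nat_add_iff 1]
  have : (fun k : ℕ => ((k + 1 : ℕ) : ℝ) * l ^ (k + 1) / (Nat.factorial (k + 1) : ℝ))
      = fun k : ℕ => l * (l ^ k / (Nat.factorial k : ℝ)) := by
    funext k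
    rw [Nat.factorial_succ]
    push_cast
    field_simp
    ring
  rw [this]
  exact (sum0 l).mul_left l

lemma expSum1 (l : ℝ) : ∑' k : ℕ, (k : ℝ) * l ^ k / (Nat.factorial k : ℝ) = l * Real.exp l := by
  rw [Summable.tsum_eq_zero_add (sum1 l)]
  have : (fun k : ℕ => ((k + 1 : ℕ) : ℝ) * l ^ (k + 1) / (Nat.factorial (k + 1) : ℝ))
      = fun k : ℕ => l * (l ^ k / (Nat.factorial k : ℝ)) := by
    funext k
    rw [Nat.factorial_succ]
    push_cast
    field_simp
    ring
  simp only [Nat.cast_zero, zero_mul, zero_div, zero_add]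
  push_cast
  rw [show (fun k : ℕ => ((k:ℝ) + 1) * l ^ (k + 1) / (Nat.factorial (k + 1) : ℝ))
      = fun k : ℕ => l * (l ^ k / (Nat.factorial k : ℝ)) by
    funext k; rw [Nat.factorial_succ]; push_cast; field_simp; ring]
  rw [tsum_mul_left, expSum0]

lemma shift2 (l : ℝ) : (fun k : ℕ => ((k + 1 : ℕ) : ℝ) ^ 2 * l ^ (k + 1) / (Nat.factorial (k + 1) : ℝ))
    = fun k : ℕ => l * ((k : ℝ) * l ^ k / (Nat.factorial k : ℝ)) + l * (l ^ k / (Nat.factorial k : ℝ)) := by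
  funext k
  rw [Nat.factorial_succ]
  push_cast
  have h1 : ((Nat.factorial k : ℝ)) ≠ 0 := Nat.cast_ne_zero.mpr (Nat.factorial_ne_zero k)
  have h2 : ((k : ℝ) + 1) ≠ 0 := by positivity
  field_simp
  ring

lemma sum2 (l : ℝ) : Summable (fun k : ℕ => (k : ℝ) ^ 2 * l ^ k / (Nat.factorial k : ℝ)) := by
  rw [← summable_nat_add_iff 1]
  have := shift2 l
  push_cast at this ⊢
  rw [this]
  exact (((sum1 l).mul_left l)).add ((sum0 l).mul_left l)

lemma expSum2 (l : ℝ) : ∑' k : ℕ, (k : ℝ) ^ 2 * l ^ k / (Nat.factorial k : ℝ)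
    = (l ^ 2 + l) * Real.exp l := by
  rw [Summable.tsum_eq_zero_add (sum2 l)]
  have := shift2 l
  push_cast at this ⊢
  rw [this, Summable.tsum_add (((sum1 l).mul_left l)) ((sum0 l).mul_left l), tsum_mul_left,
    tsum_mul_left, expSum1, expSum0]
  ring

lemma intsq (A B y : ℝ) : (∫ t in A..B, (t - y) ^ 2) = ((B - y) ^ 3 - (A - y) ^ 3) / 3 := by
  rw [show (fun t => (t - y) ^ 2) = fun t => (fun s => s ^ 2) (t - y) from rfl,
    intervalIntegral.integral_comp_sub_right (fun s => s ^ 2) y, integral_pow]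
  norm_num

lemma moment (l y : ℝ) (m : ℕ) (hm : 1 ≤ m) :
    (m : ℝ) * ∑' k : ℕ, Real.exp (-l) * l ^ k / (Nat.factorial k : ℝ) *
        ∫ t in ((k : ℝ) / (m : ℝ))..(((k : ℝ) + 1) / (m : ℝ)), (t - y) ^ 2
      = l / (m : ℝ) ^ 2 + 1 / (12 * (m : ℝ) ^ 2)
        + (l / (m : ℝ) + 1 / (2 * (m : ℝ)) - y) ^ 2 := by
  have hm0 : (0 : ℝ) < (m : ℝ) := by exact_mod_cast hm
  have hterm : (fun k : ℕ => Real.exp (-l) * l ^ k / (Nat.factorial k : ℝ) *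
        ∫ t in ((k : ℝ) / (m : ℝ))..(((k : ℝ) + 1) / (m : ℝ)), (t - y) ^ 2)
      = fun k : ℕ => Real.exp (-l) *
        ((1 / (m : ℝ) ^ 3) * ((k : ℝ) ^ 2 * l ^ k / (Nat.factorial k : ℝ))
          + (1 / (m : ℝ) ^ 3 - 2 * y / (m : ℝ) ^ 2) * ((k : ℝ) * l ^ k / (Nat.factorial k : ℝ))
          + (y ^ 2 / (m : ℝ) - y / (m : ℝ) ^ 2 + 1 / (3 * (m : ℝ) ^ 3)) *
              (l ^ k / (Nat.factorial k : ℝ))) := by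
    funext k
    rw [intsq]
    have hf : ((Nat.factorial k : ℝ)) ≠ 0 := Nat.cast_ne_zero.mpr (Nat.factorial_ne_zero k)
    field_simp
    ring
  rw [hterm]
  rw [tsum_mul_left]
  rw [Summable.tsum_add ((((sum2 l).mul_left _).add ((sum1 l).mul_left _))) ((sum0 l).mul_left _),
    Summable.tsum_add ((sum2 l).mul_left _) ((sum1 l).mul_left _),
    tsum_mul_left, tsum_mul_left, tsum_mul_left, expSum0, expSum1, expSum2]
  rw [Real.exp_neg]
  have he : Real.exp l ≠ 0 := (Real.exp_pos l).ne'
  field_simp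
  ring

lemma momSummable (l y : ℝ) (m : ℕ) (hm : 1 ≤ m) :
    Summable (fun k : ℕ => Real.exp (-l) * l ^ k / (Nat.factorial k : ℝ) *
        ∫ t in ((k : ℝ) / (m : ℝ))..(((k : ℝ) + 1) / (m : ℝ)), (t - y) ^ 2) := by
  have hm0 : (0 : ℝ) < (m : ℝ) := by exact_mod_cast hm
  have hterm : (fun k : ℕ => Real.exp (-l) * l ^ k / (Nat.factorial k : ℝ) *
        ∫ t in ((k : ℝ) / (m : ℝ))..(((k : ℝ) + 1) / (m : ℝ)), (t - y) ^ 2)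
      = fun k : ℕ => Real.exp (-l) *
        ((1 / (m : ℝ) ^ 3) * ((k : ℝ) ^ 2 * l ^ k / (Nat.factorial k : ℝ))
          + (1 / (m : ℝ) ^ 3 - 2 * y / (m : ℝ) ^ 2) * ((k : ℝ) * l ^ k / (Nat.factorial k : ℝ))
          + (y ^ 2 / (m : ℝ) - y / (m : ℝ) ^ 2 + 1 / (3 * (m : ℝ) ^ 3)) *
              (l ^ k / (Nat.factorial k : ℝ))) := by
    funext k
    rw [intsq]
    have hf : ((Nat.factorial k : ℝ)) ≠ 0 := Nat.cast_ne_zero.mpr (Nat.factorial_ne_zero k)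
    field_simp
    ring
  rw [hterm]
  exact ((((sum2 l).mul_left _).add ((sum1 l).mul_left _)).add ((sum0 l).mul_left _)).mul_left _

lemma indIntegrable (z A B : ℝ) :
    IntervalIntegrable (Set.indicator (Set.Ici z) fun _ => (1 : ℝ)) volume A B := by
  rw [intervalIntegrable_iff]
  exact (integrableOn_const measure_Ioc_lt_top.ne).indicator measurableSet_Ici

lemma indLe (y z t : ℝ) (hyz : y < z) :
    Set.indicator (Set.Ici z) (fun _ => (1 : ℝ)) t ≤ (t - y) ^ 2 / (z - y) ^ 2 := by
  have hzy : (0 : ℝ) < z - y := by linarith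
  have hz : (0 : ℝ) < (z - y) ^ 2 := by positivity
  by_cases h : t ∈ Set.Ici z
  · rw [Set.indicator_of_mem h]
    have h' : z ≤ t := h
    rw [le_div_iff₀ hz, one_mul]
    have h1 : 0 ≤ z - y := by linarith
    have h2 : z - y ≤ t - y := by linarith
    exact pow_le_pow_left₀ h1 h2 2
  · rw [Set.indicator_of_notMem h]
    positivity

lemma cheb (l : ℝ) (hl : 0 ≤ l) (m : ℕ) (hm : 1 ≤ m) (y z : ℝ) (hyz : y < z) :
    (m : ℝ) * ∑' k : ℕ, Real.exp (-l) * l ^ k / (Nat.factorial k : ℝ) *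
        ∫ t in ((k : ℝ) / (m : ℝ))..(((k : ℝ) + 1) / (m : ℝ)),
          Set.indicator (Set.Ici z) (fun _ => (1 : ℝ)) t
      ≤ ((m : ℝ) * ∑' k : ℕ, Real.exp (-l) * l ^ k / (Nat.factorial k : ℝ) *
          ∫ t in ((k : ℝ) / (m : ℝ))..(((k : ℝ) + 1) / (m : ℝ)), (t - y) ^ 2) / (z - y) ^ 2 := by
  have hm0 : (0 : ℝ) < (m : ℝ) := by exact_mod_cast hm
  have hzy : (0 : ℝ) < z - y := by linarith
  have hz2 : (0 : ℝ) < (z - y) ^ 2 := by positivity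
  set f := fun k : ℕ => Real.exp (-l) * l ^ k / (Nat.factorial k : ℝ) *
      ∫ t in ((k : ℝ) / (m : ℝ))..(((k : ℝ) + 1) / (m : ℝ)),
        Set.indicator (Set.Ici z) (fun _ => (1 : ℝ)) t with hf
  set g := fun k : ℕ => (Real.exp (-l) * l ^ k / (Nat.factorial k : ℝ) *
      ∫ t in ((k : ℝ) / (m : ℝ))..(((k : ℝ) + 1) / (m : ℝ)), (t - y) ^ 2) / (z - y) ^ 2 with hg
  have hAB : ∀ k : ℕ, (k : ℝ) / (m : ℝ) ≤ ((k : ℝ) + 1) / (m : ℝ) := fun k =>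
    (div_le_div_iff_of_pos_right hm0).mpr (by linarith)
  have hcoef : ∀ k : ℕ, 0 ≤ Real.exp (-l) * l ^ k / (Nat.factorial k : ℝ) := fun k => by
    positivity
  have hfg : ∀ k, f k ≤ g k := by
    intro k
    have hmono : (∫ t in ((k : ℝ) / (m : ℝ))..(((k : ℝ) + 1) / (m : ℝ)),
          Set.indicator (Set.Ici z) (fun _ => (1 : ℝ)) t)
        ≤ ∫ t in ((k : ℝ) / (m : ℝ))..(((k : ℝ) + 1) / (m : ℝ)), (t - y) ^ 2 / (z - y) ^ 2 := by
      apply intervalIntegral.integral_mono_on (hAB k) (indIntegrable z _ _)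
      · exact (Continuous.intervalIntegrable (by continuity) _ _)
      · intro t _
        exact indLe y z t hyz
    calc f k ≤ Real.exp (-l) * l ^ k / (Nat.factorial k : ℝ) *
          ∫ t in ((k : ℝ) / (m : ℝ))..(((k : ℝ) + 1) / (m : ℝ)), (t - y) ^ 2 / (z - y) ^ 2 :=
        mul_le_mul_of_nonneg_left hmono (hcoef k)
      _ = g k := by
        simp only [hg]
        rw [intervalIntegral.integral_div]
        ring
  have hfnonneg : ∀ k, 0 ≤ f k := by
    intro k
    apply mul_nonneg (hcoef k)
    apply intervalIntegral.integral_nonneg (hAB k)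
    intro t _
    exact Set.indicator_nonneg (fun _ _ => zero_le_one) t
  have hgsum : Summable g := (momSummable l y m hm).div_const _
  have hfsum : Summable f := Summable.of_nonneg_of_le hfnonneg hfg hgsum
  have htsum := Summable.tsum_le_tsum hfg hfsum hgsum
  calc (m : ℝ) * ∑' k, f k ≤ (m : ℝ) * ∑' k, g k :=
      mul_le_mul_of_nonneg_left htsum hm0.le
    _ = _ := by rw [hg, tsum_div_const, mul_div_assoc]

set_option maxHeartbeats 1000000 in
theorem szaszKant_kernel_right_tail (a : ℝ) (ha : 1 < a) (m : ℕ) (hm : 1 ≤ m)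
    (x z : ℝ) (hx : 0 ≤ x) (hxz : x < z) :
    szaszKant a m (Set.indicator (Set.Ici z) fun _ => (1 : ℝ)) x ≤
        szaszKantCM a m 2 x / (z - x) ^ 2 ∧
      szaszKant a m (Set.indicator (Set.Ici z) fun _ => (1 : ℝ)) x ≤
        (1 + x) ^ 2 / ((m : ℝ) * (z - x) ^ 2) := by
  have hm0 : (0 : ℝ) < (m : ℝ) := by exact_mod_cast hm
  have hmm : (1 : ℝ) ≤ (m : ℝ) := by exact_mod_cast hm
  have ha0 : (0 : ℝ) < a := by linarith
  have hrp : 1 < a ^ ((1 : ℝ) / (m : ℝ)) := by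
    apply Real.one_lt_rpow_iff_of_pos ha0 |>.mpr
    exact Or.inl ⟨ha, by positivity⟩
  have hs : 0 < a ^ ((1 : ℝ) / (m : ℝ)) - 1 := by linarith
  have hla : 0 < Real.log a := Real.log_pos ha
  set l : ℝ := x * Real.log a / (a ^ ((1 : ℝ) / (m : ℝ)) - 1) with hldef
  have hl : 0 ≤ l := by
    rw [hldef]
    positivity
  -- log a / s ≤ m
  have hexp : a ^ ((1 : ℝ) / (m : ℝ)) = Real.exp (Real.log a / (m : ℝ)) := by
    rw [Real.rpow_def_of_pos ha0]
    ring_nf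
  have hcm : Real.log a / (a ^ ((1 : ℝ) / (m : ℝ)) - 1) ≤ (m : ℝ) := by
    rw [div_le_iff₀ hs]
    have h1 := Real.add_one_le_exp (Real.log a / (m : ℝ))
    rw [← hexp] at h1
    have h2 : Real.log a / (m : ℝ) ≤ a ^ ((1 : ℝ) / (m : ℝ)) - 1 := by linarith
    calc Real.log a = (m : ℝ) * (Real.log a / (m : ℝ)) := by field_simp
      _ ≤ (m : ℝ) * (a ^ ((1 : ℝ) / (m : ℝ)) - 1) := mul_le_mul_of_nonneg_left h2 hm0.le
  have hlm : l / (m : ℝ) ≤ x := by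
    rw [hldef, div_le_iff₀ hm0, mul_div_assoc]
    exact mul_le_mul_of_nonneg_left hcm hx
  have hzx : 0 < z - x := by linarith
  have hzx2 : (0 : ℝ) < (z - x) ^ 2 := by positivity
  have claim1 : szaszKant a m (Set.indicator (Set.Ici z) fun _ => (1 : ℝ)) x ≤
      szaszKantCM a m 2 x / (z - x) ^ 2 := by
    have := cheb l hl m hm x z hxz
    rw [hldef] at this
    simp only [szaszKant, szaszKantCM]
    exact this
  refine ⟨claim1, ?_⟩
  set μ : ℝ := l / (m : ℝ) + 1 / (2 * (m : ℝ)) with hμ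
  set y : ℝ := min x μ with hy
  have hyx : y ≤ x := min_le_left _ _
  have hyz : y < z := lt_of_le_of_lt hyx hxz
  have h1 := cheb l hl m hm y z hyz
  have h2 := moment l y m hm
  rw [h2] at h1
  set M : ℝ := l / (m : ℝ) ^ 2 + 1 / (12 * (m : ℝ) ^ 2) + (l / (m : ℝ) + 1 / (2 * (m : ℝ)) - y) ^ 2
    with hM
  have hMnonneg : 0 ≤ M := by
    apply add_nonneg (add_nonneg _ (by positivity)) (sq_nonneg _)
    exact div_nonneg hl (by positivity)
  have hsq : (l / (m : ℝ) + 1 / (2 * (m : ℝ)) - y) ^ 2 ≤ 1 / (4 * (m : ℝ) ^ 2) := by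
    have h3 : 0 ≤ μ - y := sub_nonneg.mpr (min_le_right _ _)
    have h4 : μ - y ≤ 1 / (2 * (m : ℝ)) := by
      have hpos : (0 : ℝ) ≤ 1 / (2 * (m : ℝ)) := by positivity
      rcases le_total x μ with h | h
      · have hyx' : y = x := min_eq_left h
        rw [hyx', hμ]
        linarith [hlm]
      · have hyμ : y = μ := min_eq_right h
        rw [hyμ]
        linarith
    have h5 : (μ - y) ^ 2 ≤ (1 / (2 * (m : ℝ))) ^ 2 := pow_le_pow_left₀ h3 h4 2
    calc (l / (m : ℝ) + 1 / (2 * (m : ℝ)) - y) ^ 2 = (μ - y) ^ 2 := by rw [hμ]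
      _ ≤ (1 / (2 * (m : ℝ))) ^ 2 := h5
      _ = 1 / (4 * (m : ℝ) ^ 2) := by field_simp; ring
  have hMle : M ≤ (1 + x) ^ 2 / (m : ℝ) := by
    rw [hM, le_div_iff₀ hm0]
    have key : (l / (m : ℝ) ^ 2 + 1 / (12 * (m : ℝ) ^ 2)
          + (l / (m : ℝ) + 1 / (2 * (m : ℝ)) - y) ^ 2) * (m : ℝ)
        = l / (m : ℝ) + 1 / (12 * (m : ℝ))
          + (l / (m : ℝ) + 1 / (2 * (m : ℝ)) - y) ^ 2 * (m : ℝ) := by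
      field_simp
    rw [key]
    have e2 : 1 / (12 * (m : ℝ)) ≤ 1 / 12 :=
      div_le_div_of_nonneg_left zero_le_one (by norm_num) (by linarith)
    have e3 : (l / (m : ℝ) + 1 / (2 * (m : ℝ)) - y) ^ 2 * (m : ℝ) ≤ 1 / (4 * (m : ℝ)) := by
      calc (l / (m : ℝ) + 1 / (2 * (m : ℝ)) - y) ^ 2 * (m : ℝ)
          ≤ 1 / (4 * (m : ℝ) ^ 2) * (m : ℝ) := mul_le_mul_of_nonneg_right hsq hm0.le
        _ = 1 / (4 * (m : ℝ)) := by field_simp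
    have e4 : (1 : ℝ) / (4 * (m : ℝ)) ≤ 1 / 4 :=
      div_le_div_of_nonneg_left zero_le_one (by norm_num) (by linarith)
    nlinarith [hlm, e2, e3, e4, hx, sq_nonneg x]
  calc szaszKant a m (Set.indicator (Set.Ici z) fun _ => (1 : ℝ)) x ≤ M / (z - y) ^ 2 := by
        rw [hldef] at h1
        simp only [szaszKant]
        exact h1
    _ ≤ M / (z - x) ^ 2 := by
        apply div_le_div_of_nonneg_left hMnonneg hzx2
        nlinarith [hyx, hzx]
    _ ≤ ((1 + x) ^ 2 / (m : ℝ)) / (z - x) ^ 2 := by gcongr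
    _ = (1 + x) ^ 2 / ((m : ℝ) * (z - x) ^ 2) := by rw [div_div]
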